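/- Let k ≥ 1 and let m ≥ 1 be a natural number. If m has more than k distinct prime factors, then ∑_{d | m} μ(d) (log(m/d))^k = 0. Moreover, if m = p_1 p_2 ⋯ p_k is squarefree with exactly k distinct prime factors p_1, …, p_k, then ∑_{d | m} μ(d) (log(m/d))^k = k! · (log p_1)(log p_2)⋯(log p_k). -/

import Mathlib

open ArithmeticFunction Finset

private lemma key_lemma {ι : Type*} [DecidableEq ι] (w : ι → ℝ) (s : Finset ι) :
    ∀ (k : ℕ) (L : ℝ),
      (k < s.card → ∑ t ∈ s.powerset, (-1:ℝ)^t.card * (L - ∑ i ∈ t, w i)^k = 0) ∧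
      (k = s.card → ∑ t ∈ s.powerset, (-1:ℝ)^t.card * (L - ∑ i ∈ t, w i)^k =
        (k.factorial : ℝ) * ∏ i ∈ s, w i) := by
  induction s using Finset.induction_on with
  | empty =>
    intro k L
    constructor
    · intro h; simp at h
    · intro h; subst h; simp
  | @insert a s ha ih =>
    intro k L
    have hrec : ∀ (k : ℕ) (L : ℝ),
        ∑ t ∈ (insert a s).powerset, (-1:ℝ)^t.card * (L - ∑ i ∈ t, w i)^k =
        (∑ t ∈ s.powerset, (-1:ℝ)^t.card * (L - ∑ i ∈ t, w i)^k) -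
        ∑ t ∈ s.powerset, (-1:ℝ)^t.card * ((L - w a) - ∑ i ∈ t, w i)^k := by
      intro k L
      rw [Finset.sum_powerset_insert ha]
      have : ∀ t ∈ s.powerset, (-1:ℝ)^(insert a t).card * (L - ∑ i ∈ insert a t, w i)^k =
          -((-1:ℝ)^t.card * ((L - w a) - ∑ i ∈ t, w i)^k) := by
        intro t ht
        have hat : a ∉ t := fun h => ha (Finset.mem_powerset.mp ht h)
        rw [Finset.card_insert_of_notMem hat, Finset.sum_insert hat, pow_succ]
        ring_nf
      rw [Finset.sum_congr rfl this, Finset.sum_neg_distrib]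
      ring
    have hcard : (insert a s).card = s.card + 1 := Finset.card_insert_of_notMem ha
    constructor
    · intro hlt
      rw [hcard] at hlt
      rw [hrec]
      rcases lt_or_eq_of_le (Nat.lt_succ_iff.mp hlt) with h | h
      · rw [(ih k L).1 h, (ih k (L - w a)).1 h, sub_zero]
      · rw [(ih k L).2 h, (ih k (L - w a)).2 h, sub_self]
    · intro heq
      rw [hcard] at heq
      rw [hrec]
      have expand : ∀ t : Finset ι, ((L - w a) - ∑ i ∈ t, w i)^k =
          ∑ j ∈ Finset.range (k+1),
            (-1:ℝ)^(j+k) * (L - ∑ i ∈ t, w i)^j * (w a)^(k-j) * (k.choose j) := by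
        intro t
        rw [show (L - w a) - ∑ i ∈ t, w i = (L - ∑ i ∈ t, w i) - w a by ring, sub_pow]
      have swap : ∑ t ∈ s.powerset, (-1:ℝ)^t.card * ((L - w a) - ∑ i ∈ t, w i)^k =
          ∑ j ∈ Finset.range (k+1), (-1:ℝ)^(j+k) * (w a)^(k-j) * (k.choose j) *
            ∑ t ∈ s.powerset, (-1:ℝ)^t.card * (L - ∑ i ∈ t, w i)^j := by
        rw [Finset.sum_congr rfl (fun t _ => by rw [expand t, Finset.mul_sum]),
          Finset.sum_comm]
        refine Finset.sum_congr rfl fun j _ => ?_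
        rw [Finset.mul_sum]
        refine Finset.sum_congr rfl fun t _ => ?_
        ring
      rw [swap, Finset.sum_range_succ]
      have hlast : (-1:ℝ)^(k+k) * (w a)^(k-k) * (k.choose k) *
          ∑ t ∈ s.powerset, (-1:ℝ)^t.card * (L - ∑ i ∈ t, w i)^k =
          ∑ t ∈ s.powerset, (-1:ℝ)^t.card * (L - ∑ i ∈ t, w i)^k := by
        rw [Nat.sub_self, pow_zero, Nat.choose_self, ← two_mul, pow_mul]
        norm_num
      rw [hlast]
      have hmain : ∑ j ∈ Finset.range k, (-1:ℝ)^(j+k) * (w a)^(k-j) * (k.choose j) *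
          ∑ t ∈ s.powerset, (-1:ℝ)^t.card * (L - ∑ i ∈ t, w i)^j =
          -((k.factorial : ℝ) * ∏ i ∈ insert a s, w i) := by
        rw [Finset.sum_eq_single_of_mem s.card (by rw [Finset.mem_range]; omega)
          (fun j hjm hj => ?_)]
        · rw [(ih s.card L).2 rfl]
          have h1 : k - s.card = 1 := by omega
          have h2 : k.choose s.card = k := by
            rw [heq, Nat.choose_succ_self_right]
          have h3 : (-1:ℝ)^(s.card + k) = -1 := by
            rw [heq, show s.card + (s.card + 1) = 2 * s.card + 1 by ring, pow_succ,
              pow_mul]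
            norm_num
          have h4 : (k.factorial : ℝ) = k * s.card.factorial := by
            rw [heq, Nat.factorial_succ]; push_cast; ring
          rw [h1, h2, h3, h4, Finset.prod_insert ha, pow_one]
          ring
        · rw [Finset.mem_range] at hjm
          have hjlt : j < s.card := by omega
          rw [(ih j L).1 hjlt, mul_zero]
      rw [hmain]
      ring

private lemma sum_transform (k m : ℕ) (hm : 1 ≤ m) :
    ∑ d ∈ m.divisors, (moebius d : ℝ) * (Real.log ((m : ℝ) / (d : ℝ))) ^ k =
    ∑ t ∈ m.primeFactors.powerset, (-1:ℝ)^t.card *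
      (Real.log m - ∑ p ∈ t, Real.log p)^k := by
  have hm0 : m ≠ 0 := by omega
  rw [← Finset.sum_filter_of_ne (p := Squarefree)
    (fun d _ hne => by
      by_contra h
      rw [moebius_eq_zero_of_not_squarefree h] at hne
      simp at hne)]
  rw [Nat.sum_divisors_filter_squarefree hm0]
  have hnf : (UniqueFactorizationMonoid.normalizedFactors m).toFinset = m.primeFactors := by
    rw [Nat.factors_eq]
    exact Nat.toFinset_factors m
  rw [hnf]
  refine Finset.sum_congr rfl fun t ht => ?_
  rw [Finset.mem_powerset] at ht
  have hprime : ∀ p ∈ t, p.Prime := fun p hp => Nat.prime_of_mem_primeFactors (ht hp)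
  have hval : (t.val.prod : ℕ) = ∏ p ∈ t, p := by
    rw [Finset.prod_eq_multiset_prod, Multiset.map_id']
  rw [hval]
  have hprodne : (∏ p ∈ t, p) ≠ 0 :=
    Finset.prod_ne_zero_iff.mpr (fun p hp => (hprime p hp).ne_zero)
  have hmu : (moebius (∏ p ∈ t, p) : ℝ) = (-1:ℝ)^t.card := by
    rw [ArithmeticFunction.IsMultiplicative.map_prod_of_subset_primeFactors
      isMultiplicative_moebius m t ht]
    push_cast
    rw [Finset.prod_congr rfl (fun p hp => by
      rw [moebius_apply_prime (hprime p hp)]; norm_num : ∀ p ∈ t, ((moebius p : ℤ) : ℝ) = -1)]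
    rw [Finset.prod_const]
  have hlog : Real.log ((m : ℝ) / ((∏ p ∈ t, p : ℕ) : ℝ)) =
      Real.log m - ∑ p ∈ t, Real.log p := by
    rw [Real.log_div (by exact_mod_cast hm0) (by exact_mod_cast hprodne)]
    congr 1
    rw [Nat.cast_prod, Real.log_prod]
    intro p hp
    exact_mod_cast (hprime p hp).ne_zero
  rw [hmu, hlog]

/-- If `m` has more than `k` distinct prime factors then `∑_{d ∣ m} μ(d) (log(m/d))^k = 0`,
and if `m` is squarefree with exactly `k` distinct prime factors `p₁, …, p_k` then the sum
equals `k! (log p₁) ⋯ (log p_k)`. -/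
theorem moebius_log_sum (k m : ℕ) (hk : 1 ≤ k) (hm : 1 ≤ m) :
    (k < m.primeFactors.card →
      ∑ d ∈ m.divisors, (moebius d : ℝ) * (Real.log ((m : ℝ) / (d : ℝ))) ^ k = 0) ∧
    (Squarefree m → m.primeFactors.card = k →
      ∑ d ∈ m.divisors, (moebius d : ℝ) * (Real.log ((m : ℝ) / (d : ℝ))) ^ k =
        (k.factorial : ℝ) * ∏ p ∈ m.primeFactors, Real.log p) := by
  rw [sum_transform k m hm]
  constructor
  · intro hlt
    exact (key_lemma (fun p : ℕ => Real.log p) m.primeFactors k (Real.log m)).1 hlt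
  · intro _ hcard
    exact (key_lemma (fun p : ℕ => Real.log p) m.primeFactors k (Real.log m)).2 hcard.symm
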